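/- Let n ≥ 1, let Q be an n×n real symmetric positive definite matrix, and let a > 0 satisfy a·λ > 1 for every eigenvalue λ of Q. Then (1/(2a))·tr( Q⁻¹ (a Q − I_n)⁻¹ ) > (1/(2a²))·tr( Q⁻² ), i.e., the third-order coherence with all gains equal to a strictly exceeds the second-order coherence with all gains equal to a. -/

import Mathlib

open Matrix Polynomial

/-- Any element of the real spectrum of a real matrix is a root of its charpoly. -/
lemma isRoot_charpoly_of_mem_spectrum {n : ℕ} {Q : Matrix (Fin n) (Fin n) ℝ} {μ : ℝ}
    (h : μ ∈ spectrum ℝ Q) : Q.charpoly.IsRoot μ := by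
  have hnu : ¬ IsUnit (algebraMap ℝ (Matrix (Fin n) (Fin n) ℝ) μ - Q) := spectrum.mem_iff.mp h
  have hdet : (algebraMap ℝ (Matrix (Fin n) (Fin n) ℝ) μ - Q).det = 0 := by
    by_contra hd
    exact hnu ((Matrix.isUnit_iff_isUnit_det _).mpr (isUnit_iff_ne_zero.mpr hd))
  have hmap : (Q.charmatrix).map (Polynomial.evalRingHom μ)
      = algebraMap ℝ (Matrix (Fin n) (Fin n) ℝ) μ - Q := by
    ext i j
    by_cases hij : i = j
    · subst hij
      simp [charmatrix_apply_eq, Matrix.algebraMap_matrix_apply]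
    · simp [charmatrix_apply_ne _ _ _ hij, Matrix.algebraMap_matrix_apply, hij]
  have heval : Q.charpoly.eval μ = ((Q.charmatrix).map (Polynomial.evalRingHom μ)).det := by
    rw [Matrix.charpoly]
    simpa [RingHom.mapMatrix_apply] using (Polynomial.evalRingHom μ).map_det Q.charmatrix
  show Q.charpoly.eval μ = 0
  rw [heval, hmap, hdet]

/-- Conjugation of a positive definite matrix by an invertible matrix is positive definite. -/
lemma posDef_conj {n : ℕ} {A B : Matrix (Fin n) (Fin n) ℝ} (hA : A.PosDef)
    (hB : IsUnit B.det) : (Bᴴ * A * B).PosDef := by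
  refine Matrix.PosDef.of_dotProduct_mulVec_pos (Matrix.isHermitian_conjTranspose_mul_mul B hA.1) fun x hx => ?_
  have hBx : B *ᵥ x ≠ 0 := fun h0 => hx (Matrix.eq_zero_of_mulVec_eq_zero hB.ne_zero h0)
  have := hA.dotProduct_mulVec_pos hBx
  simpa only [star_mulVec, Matrix.dotProduct_mulVec, Matrix.vecMul_vecMul] using this

/-- A positive semidefinite matrix with nonzero determinant is positive definite. -/
lemma posDef_of_posSemidef_det_ne_zero {n : ℕ} {A : Matrix (Fin n) (Fin n) ℝ}
    (hA : A.PosSemidef) (hd : A.det ≠ 0) : A.PosDef := by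
  refine Matrix.PosDef.of_dotProduct_mulVec_pos hA.1 fun x hx => lt_of_le_of_ne (hA.dotProduct_mulVec_nonneg x) fun h0 => hx ?_
  have hAx : A *ᵥ x = 0 := (hA.dotProduct_mulVec_zero_iff x).mp h0.symm
  exact Matrix.eq_zero_of_mulVec_eq_zero hd hAx

/-- A positive definite matrix has positive trace (when the index type is nonempty). -/
lemma posDef_trace_pos {n : ℕ} (hn : 1 ≤ n) {A : Matrix (Fin n) (Fin n) ℝ}
    (hA : A.PosDef) : 0 < A.trace := by
  have hpos : ∀ i, 0 < A i i := by
    intro i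
    have hne : (Pi.single i 1 : Fin n → ℝ) ≠ 0 := by
      intro h
      have := congrFun h i
      simp at this
    have := hA.dotProduct_mulVec_pos hne
    simpa [dotProduct, Matrix.mulVec, Pi.single_apply, Finset.sum_ite_eq,
      Finset.mul_sum] using this
  have : Nonempty (Fin n) := ⟨⟨0, hn⟩⟩
  rw [Matrix.trace]
  exact Finset.sum_pos (fun i _ => hpos i) Finset.univ_nonempty

/-- With all gains equal to `a`, the third-order coherence strictly exceeds the
second-order coherence: `(1/(2a))·tr(Q⁻¹(aQ − I)⁻¹) > (1/(2a²))·tr(Q⁻²)`. -/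
theorem thirdOrder_coherence_gt_secondOrder (n : ℕ) (hn : 1 ≤ n)
    (Q : Matrix (Fin n) (Fin n) ℝ) (hQ : Q.PosDef)
    (a : ℝ) (ha : 0 < a) (heig : ∀ lam ∈ Q.charpoly.roots, 1 < a * lam) :
    (1 / (2 * a ^ 2)) * Matrix.trace (Q⁻¹ * Q⁻¹) <
      (1 / (2 * a)) *
        Matrix.trace (Q⁻¹ * (a • Q - (1 : Matrix (Fin n) (Fin n) ℝ))⁻¹) := by
  classical
  set S : Matrix (Fin n) (Fin n) ℝ := a • Q - 1 with hSdef
  have hH := hQ.isHermitian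
  -- eigenvalues of Q satisfy 1 < a * λ
  have heigval : ∀ i, 1 < a * hH.eigenvalues i := by
    intro i
    apply heig
    rw [Polynomial.mem_roots (Q.charpoly_monic.ne_zero)]
    exact isRoot_charpoly_of_mem_spectrum (hH.eigenvalues_mem_spectrum_real i)
  -- spectral decomposition of S
  set U : Matrix (Fin n) (Fin n) ℝ := (hH.eigenvectorUnitary : Matrix (Fin n) (Fin n) ℝ)
  have hUU : U * star U = 1 := Matrix.mem_unitaryGroup_iff.mp hH.eigenvectorUnitary.2
  have hSspec : S = U * Matrix.diagonal (fun i => a * hH.eigenvalues i - 1) * star U := by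
    have hQspec := hH.spectral_theorem
    rw [Unitary.conjStarAlgAut_apply] at hQspec
    have h1 : (1 : Matrix (Fin n) (Fin n) ℝ) = U * (1 : Matrix (Fin n) (Fin n) ℝ) * star U := by
      rw [mul_one, hUU]
    calc S = a • (U * Matrix.diagonal (RCLike.ofReal ∘ hH.eigenvalues) * star U) - 1 := by
              rw [hSdef, ← hQspec]
      _ = U * (a • Matrix.diagonal (RCLike.ofReal ∘ hH.eigenvalues) - 1) * star U := by
              rw [Matrix.mul_sub, Matrix.sub_mul, mul_one, hUU, Matrix.mul_smul, Matrix.smul_mul]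
      _ = U * Matrix.diagonal (fun i => a * hH.eigenvalues i - 1) * star U := by
              congr 1
              congr 1
              ext i j
              by_cases hij : i = j
              · subst hij
                simp [Matrix.diagonal_apply_eq, Matrix.one_apply_eq]
              · simp [Matrix.diagonal_apply_ne _ hij, Matrix.one_apply_ne hij]
  -- S is positive definite
  have hdiagpos : ∀ i, 0 < a * hH.eigenvalues i - 1 := fun i => by linarith [heigval i]
  have hSsemi : S.PosSemidef := by
    rw [hSspec]
    exact (Matrix.posSemidef_diagonal_iff.mpr fun i => (hdiagpos i).le).mul_mul_conjTranspose_same U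
  have hSdet : S.det ≠ 0 := by
    rw [hSspec, Matrix.det_mul, Matrix.det_mul, Matrix.det_diagonal]
    have h1 : U.det * (star U).det = 1 := by rw [← Matrix.det_mul, hUU, Matrix.det_one]
    have h2 : (0:ℝ) < ∏ i, (a * hH.eigenvalues i - 1) := Finset.prod_pos fun i _ => hdiagpos i
    intro h
    rw [mul_comm U.det _, mul_assoc, h1, mul_one] at h
    exact h2.ne' h
  have hS : S.PosDef := posDef_of_posSemidef_det_ne_zero hSsemi hSdet
  -- invertibility facts
  have hQdet : IsUnit Q.det := isUnit_iff_ne_zero.mpr hQ.det_pos.ne'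
  have hSdetU : IsUnit S.det := isUnit_iff_ne_zero.mpr hSdet
  have hQidet : IsUnit (Q⁻¹).det := isUnit_iff_ne_zero.mpr (hQ.inv).det_pos.ne'
  -- key identity : S⁻¹ = a⁻¹ • Q⁻¹ + S⁻¹ * (a⁻¹ • Q⁻¹)
  have hB : (a • Q)⁻¹ = a⁻¹ • Q⁻¹ := by
    haveI : Invertible a := invertibleOfNonzero ha.ne'
    rw [Q.inv_smul a hQdet, invOf_eq_inv a]
  have hkey : S⁻¹ = a⁻¹ • Q⁻¹ + S⁻¹ * (a⁻¹ • Q⁻¹) := by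
    have haQdet : IsUnit (a • Q).det := by
      rw [Matrix.det_smul]
      exact (IsUnit.pow _ (isUnit_iff_ne_zero.mpr ha.ne')).mul hQdet
    have h1 : (S⁻¹ * ((a • Q) - S)) * (a • Q)⁻¹ = S⁻¹ - (a • Q)⁻¹ := by
      rw [Matrix.mul_sub, Matrix.sub_mul,
        Matrix.mul_assoc S⁻¹ (a • Q) (a • Q)⁻¹, Matrix.mul_nonsing_inv _ haQdet, mul_one,
        Matrix.nonsing_inv_mul _ hSdetU, one_mul]
    have h2 : (a • Q) - S = 1 := by rw [hSdef, sub_sub_cancel]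
    rw [h2, mul_one] at h1
    rw [← hB, h1]
    abel
  -- the correction term is positive
  have hM : (Q⁻¹ * S⁻¹ * Q⁻¹).PosDef := by
    have := posDef_conj (hS.inv) hQidet
    have hQiH : (Q⁻¹)ᴴ = Q⁻¹ := hH.inv
    rwa [hQiH] at this
  have htr3 : 0 < Matrix.trace (Q⁻¹ * S⁻¹ * Q⁻¹) := posDef_trace_pos hn hM
  -- trace computation
  have htrace : Matrix.trace (Q⁻¹ * S⁻¹)
      = a⁻¹ * Matrix.trace (Q⁻¹ * Q⁻¹) + a⁻¹ * Matrix.trace (Q⁻¹ * S⁻¹ * Q⁻¹) := by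
    calc Matrix.trace (Q⁻¹ * S⁻¹)
        = Matrix.trace (Q⁻¹ * (a⁻¹ • Q⁻¹ + S⁻¹ * (a⁻¹ • Q⁻¹))) := by rw [← hkey]
      _ = a⁻¹ * Matrix.trace (Q⁻¹ * Q⁻¹) + a⁻¹ * Matrix.trace (Q⁻¹ * S⁻¹ * Q⁻¹) := by
          rw [Matrix.mul_add, Matrix.trace_add]
          congr 1
          · rw [Matrix.mul_smul, Matrix.trace_smul, smul_eq_mul]
          · rw [← Matrix.mul_assoc, Matrix.mul_smul, Matrix.trace_smul, smul_eq_mul]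
  set t2 := Matrix.trace (Q⁻¹ * Q⁻¹) with ht2
  set t3 := Matrix.trace (Q⁻¹ * S⁻¹ * Q⁻¹) with ht3
  have hcoef : (1 / (2 * a)) * a⁻¹ = 1 / (2 * a ^ 2) := by
    field_simp
  have hexp : (1 / (2 * a)) * (a⁻¹ * t2 + a⁻¹ * t3)
      = 1 / (2 * a ^ 2) * t2 + 1 / (2 * a ^ 2) * t3 := by
    rw [mul_add, ← mul_assoc, ← mul_assoc, hcoef]
  rw [htrace, hexp]
  have hpos := mul_pos (show (0:ℝ) < 1 / (2 * a ^ 2) by positivity) htr3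
  linarith
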